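/- Fix a ∈ ℝ, b, c ∈ ℂ with c ≠ 0, and E ∈ ℝ, and set Δ = (a² + |b|² + |c|² + 1 − E²)² − 4|c|². If Δ ≤ 0, then the only ℓ²-solution of the half-line eigenvalue equation is ψ = 0, i.e., Sol(a, b, c, E) = {0}. -/

import Mathlib

noncomputable section

open scoped ComplexConjugate

/-- The on-site matrix `V` of the local model. -/
def Vmat (a : ℝ) (b c : ℂ) : Matrix (Fin 4) (Fin 4) ℂ :=
  !![(a : ℂ), conj c, 0, conj b;
     c, -(a : ℂ), conj b, 0;
     0, b, (a : ℂ), -c;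
     b, 0, -(conj c), -(a : ℂ)]

/-- The hopping matrix `A` of the local model. -/
def Amat : Matrix (Fin 4) (Fin 4) ℂ :=
  !![0, -1, 0, 0;
     0, 0, 0, 0;
     0, 0, 0, 0;
     0, 0, 1, 0]

/-- `ψ : ℕ → (Fin 4 → ℂ)` (with `ψ n` standing for the value at the site `n + 1` of the
half-line `{1, 2, 3, …}`) solves the half-line eigenvalue equation `(H♯ − E)ψ = 0`:
`(V − E·I)ψ(1) + A*ψ(2) = 0` and `Aψ(n) + (V − E·I)ψ(n+1) + A*ψ(n+2) = 0` for all `n ≥ 1`. -/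
def IsSolSeq (a : ℝ) (b c : ℂ) (E : ℝ) (ψ : ℕ → Fin 4 → ℂ) : Prop :=
  (Vmat a b c - (E : ℂ) • 1).mulVec (ψ 0) + (Amat.conjTranspose).mulVec (ψ 1) = 0 ∧
    ∀ n : ℕ,
      Amat.mulVec (ψ n) + (Vmat a b c - (E : ℂ) • 1).mulVec (ψ (n + 1)) +
        (Amat.conjTranspose).mulVec (ψ (n + 2)) = 0

/-- The `ℓ²` condition: `∑_{n ≥ 1} ‖ψ(n)‖² < ∞`. -/
def IsL2Seq (ψ : ℕ → Fin 4 → ℂ) : Prop :=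
  Summable fun n => ∑ i, ‖ψ n i‖ ^ 2

/-- The space `Sol(a, b, c, E)` of `ℓ²`-solutions of the half-line eigenvalue equation. -/
def Sol (a : ℝ) (b c : ℂ) (E : ℝ) : Set (ℕ → Fin 4 → ℂ) :=
  {ψ | IsSolSeq a b c E ψ ∧ IsL2Seq ψ}

/-- The sequence `e₁` with `e₁(n) = (c^{n−1}, 0, 0, 0)` (convention `0⁰ = 1`). -/
def eSeq₁ (c : ℂ) : ℕ → Fin 4 → ℂ := fun n => ![c ^ n, 0, 0, 0]

/-- The sequence `e₄` with `e₄(n) = (0, 0, 0, c^{n−1})` (convention `0⁰ = 1`). -/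
def eSeq₄ (c : ℂ) : ℕ → Fin 4 → ℂ := fun n => ![0, 0, 0, c ^ n]

/-- A geometric sequence with unimodular ratio that tends to zero is zero. -/
lemma geom_zero (z : ℂ) (hz : ‖z‖ = 1) (u : ℕ → ℂ)
    (hrec : ∀ n, u (n + 1) = z * u n)
    (hlim : Filter.Tendsto u Filter.atTop (nhds 0)) : ∀ n, u n = 0 := by
  have hnorm : ∀ n, ‖u n‖ = ‖u 0‖ := by
    intro n
    induction n with
    | zero => rfl
    | succ k ih => rw [hrec k, norm_mul, hz, one_mul, ih]
  have h0 : ‖u 0‖ = 0 := by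
    have h1 : Filter.Tendsto (fun n => ‖u n‖) Filter.atTop (nhds ‖u 0‖) := by
      simp only [hnorm]; exact tendsto_const_nhds
    have h2 : Filter.Tendsto (fun n => ‖u n‖) Filter.atTop (nhds 0) := by
      simpa using hlim.norm
    exact tendsto_nhds_unique h1 h2
  intro n
  exact norm_eq_zero.mp ((hnorm n).trans h0)

/-- A solution of a second-order recursion with unimodular characteristic roots
that tends to zero is zero. -/
lemma quad_zero (z₁ z₂ : ℂ) (h1 : ‖z₁‖ = 1) (h2 : ‖z₂‖ = 1) (u : ℕ → ℂ)
    (hrec : ∀ n, u (n + 2) = (z₁ + z₂) * u (n + 1) - (z₁ * z₂) * u n)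
    (hlim : Filter.Tendsto u Filter.atTop (nhds 0)) : ∀ n, u n = 0 := by
  have hv : ∀ n, u (n + 1) - z₁ * u n = 0 := by
    apply geom_zero z₂ h2 (fun m => u (m + 1) - z₁ * u m)
    · intro n
      show u (n + 1 + 1) - z₁ * u (n + 1) = z₂ * (u (n + 1) - z₁ * u n)
      rw [show n + 1 + 1 = n + 2 from rfl, hrec n]; ring
    · have l1 : Filter.Tendsto (fun n => u (n + 1)) Filter.atTop (nhds (0 : ℂ)) :=
        hlim.comp (Filter.tendsto_add_atTop_nat 1)
      have l2 := hlim.const_mul z₁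
      simpa using l1.sub l2
  have hu1 : ∀ n, u (n + 1) = z₁ * u n := fun n => sub_eq_zero.mp (hv n)
  exact geom_zero z₁ h1 u hu1 hlim

/-- Each component of an `ℓ²` sequence tends to zero. -/
lemma comp_tendsto (ψ : ℕ → Fin 4 → ℂ) (h : Summable fun n => ∑ i, ‖ψ n i‖ ^ 2)
    (i : Fin 4) : Filter.Tendsto (fun n => ψ n i) Filter.atTop (nhds 0) := by
  have hsum := h.tendsto_atTop_zero
  have hsq : Filter.Tendsto (fun n => ‖ψ n i‖ ^ 2) Filter.atTop (nhds 0) := by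
    apply squeeze_zero (fun n => sq_nonneg _) (fun n => ?_) hsum
    exact Finset.single_le_sum (fun j _ => sq_nonneg (‖ψ n j‖)) (Finset.mem_univ i)
  have hnorm : Filter.Tendsto (fun n => ‖ψ n i‖) Filter.atTop (nhds 0) := by
    have := hsq.sqrt
    simpa [Real.sqrt_sq (norm_nonneg _)] using this
  exact tendsto_zero_iff_norm_tendsto_zero.mpr hnorm

lemma norm_aux (s t : ℝ) (c : ℂ) (hc : c ≠ 0) (h : s ^ 2 + t ^ 2 = 4 * ‖c‖ ^ 2) :
    ‖((s : ℂ) + (t : ℂ) * Complex.I) / (2 * conj c)‖ = 1 := by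
  have h1 : ‖(s : ℂ) + (t : ℂ) * Complex.I‖ = Real.sqrt (s ^ 2 + t ^ 2) := by
    rw [Complex.norm_def, Complex.normSq_apply]
    simp [Complex.add_re, Complex.add_im, Complex.ofReal_re, Complex.ofReal_im,
      Complex.mul_re, Complex.mul_im, Complex.I_re, Complex.I_im]
    ring_nf
  have hsq : Real.sqrt (s ^ 2 + t ^ 2) = 2 * ‖c‖ := by
    rw [h, show (4 : ℝ) * ‖c‖ ^ 2 = (2 * ‖c‖) ^ 2 by ring, Real.sqrt_sq (by positivity)]
  have hc' : ‖c‖ ≠ 0 := norm_ne_zero_iff.mpr hc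
  rw [norm_div, h1, hsq, norm_mul, RCLike.norm_conj]
  rw [show ‖(2 : ℂ)‖ = 2 by norm_num]
  exact div_self (by exact mul_ne_zero two_ne_zero hc')

/-- Fix `a ∈ ℝ`, `b, c ∈ ℂ` with `c ≠ 0`, and `E ∈ ℝ`, and set
`Δ = (a² + |b|² + |c|² + 1 − E²)² − 4|c|²`. If `Δ ≤ 0`, then the only ℓ²-solution of the
half-line eigenvalue equation is `ψ = 0`, i.e. `Sol(a,b,c,E) = {0}`. -/
theorem stmt10 (a : ℝ) (b c : ℂ) (hc : c ≠ 0) (E : ℝ)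
    (hΔ : (a ^ 2 + ‖b‖ ^ 2 + ‖c‖ ^ 2 + 1 - E ^ 2) ^ 2 - 4 * ‖c‖ ^ 2 ≤ 0) :
    Sol a b c E = {0} := by
  rw [Set.eq_singleton_iff_unique_mem]
  constructor
  · refine ⟨⟨?_, fun n => ?_⟩, ?_⟩
    · simp [Matrix.mulVec_zero]
    · simp [Matrix.mulVec_zero]
    · simp only [IsL2Seq, Pi.zero_apply, norm_zero]
      simpa using summable_zero
  · rintro ψ ⟨⟨hb, hn⟩, hl2⟩
    set sR : ℝ := a ^ 2 + ‖b‖ ^ 2 + ‖c‖ ^ 2 + 1 - E ^ 2 with hsRdef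
    have hcb : conj c ≠ 0 := by
      simpa using (map_ne_zero (starRingEnd ℂ)).mpr hc
    have hnn : 0 ≤ 4 * ‖c‖ ^ 2 - sR ^ 2 := by linarith
    set t : ℝ := Real.sqrt (4 * ‖c‖ ^ 2 - sR ^ 2) with htdef
    have ht2 : t ^ 2 = 4 * ‖c‖ ^ 2 - sR ^ 2 := Real.sq_sqrt hnn
    set z₁ : ℂ := ((sR : ℂ) + (t : ℂ) * Complex.I) / (2 * conj c) with hz₁def
    set z₂ : ℂ := ((sR : ℂ) - (t : ℂ) * Complex.I) / (2 * conj c) with hz₂def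
    have hcc : c * conj c = ((‖c‖ ^ 2 : ℝ) : ℂ) := by
      rw [Complex.mul_conj]
      norm_cast
      rw [Complex.normSq_eq_norm_sq]
    have hz1 : ‖z₁‖ = 1 := by
      rw [hz₁def]
      exact norm_aux sR t c hc (by linarith)
    have hz2 : ‖z₂‖ = 1 := by
      have : z₂ = (((sR : ℝ) : ℂ) + ((-t : ℝ) : ℂ) * Complex.I) / (2 * conj c) := by
        rw [hz₂def]; push_cast; ring
      rw [this]
      exact norm_aux sR (-t) c hc (by nlinarith)
    have hsum : z₁ + z₂ = (sR : ℂ) / conj c := by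
      rw [hz₁def, hz₂def]
      field_simp
      ring
    have ht2c : ((t : ℂ)) ^ 2 = 4 * (c * conj c) - ((sR : ℂ)) ^ 2 := by
      calc ((t : ℂ)) ^ 2 = ((t ^ 2 : ℝ) : ℂ) := by push_cast; ring
        _ = ((4 * ‖c‖ ^ 2 - sR ^ 2 : ℝ) : ℂ) := by rw [ht2]
        _ = 4 * (((‖c‖ ^ 2 : ℝ)) : ℂ) - ((sR : ℂ)) ^ 2 := by push_cast; ring
        _ = 4 * (c * conj c) - ((sR : ℂ)) ^ 2 := by rw [hcc]
    have hprod : z₁ * z₂ = c / conj c := by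
      rw [hz₁def, hz₂def, div_mul_div_comm, div_eq_div_iff (mul_ne_zero (mul_ne_zero two_ne_zero hcb) (mul_ne_zero two_ne_zero hcb)) hcb]
      linear_combination (-(t : ℂ) ^ 2 * conj c) * Complex.I_sq + conj c * ht2c
    -- scalar equations
    have hP : ∀ n : ℕ,
        c * ψ n 0 - ((a : ℂ) + E) * ψ n 1 + conj b * ψ n 2 - ψ (n + 1) 0 = 0 := by
      intro n
      match n with
      | 0 =>
        have h1 := congrFun hb 1
        simp [Vmat, Amat, Matrix.sub_mulVec, Matrix.smul_mulVec, Matrix.one_mulVec,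
          Matrix.mulVec, dotProduct, Fin.sum_univ_four,
          Matrix.conjTranspose_apply, Matrix.vecHead, Matrix.vecTail, smul_eq_mul] at h1
        linear_combination h1
      | (m + 1) =>
        have h1 := congrFun (hn m) 1
        simp [Vmat, Amat, Matrix.sub_mulVec, Matrix.smul_mulVec, Matrix.one_mulVec,
          Matrix.mulVec, dotProduct, Fin.sum_univ_four,
          Matrix.conjTranspose_apply, Matrix.vecHead, Matrix.vecTail, smul_eq_mul] at h1
        simp only [show m + 1 + 1 = m + 2 from rfl]
        linear_combination h1
    have hQ : ∀ n : ℕ,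
        b * ψ n 1 + ((a : ℂ) - E) * ψ n 2 - c * ψ n 3 + ψ (n + 1) 3 = 0 := by
      intro n
      match n with
      | 0 =>
        have h1 := congrFun hb 2
        simp [Vmat, Amat, Matrix.sub_mulVec, Matrix.smul_mulVec, Matrix.one_mulVec,
          Matrix.mulVec, dotProduct, Fin.sum_univ_four,
          Matrix.conjTranspose_apply, Matrix.vecHead, Matrix.vecTail, smul_eq_mul] at h1
        linear_combination h1
      | (m + 1) =>
        have h1 := congrFun (hn m) 2
        simp [Vmat, Amat, Matrix.sub_mulVec, Matrix.smul_mulVec, Matrix.one_mulVec,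
          Matrix.mulVec, dotProduct, Fin.sum_univ_four,
          Matrix.conjTranspose_apply, Matrix.vecHead, Matrix.vecTail, smul_eq_mul] at h1
        simp only [show m + 1 + 1 = m + 2 from rfl]
        linear_combination h1
    have hR0 : ∀ n : ℕ,
        -ψ n 1 + ((a : ℂ) - E) * ψ (n + 1) 0 + conj c * ψ (n + 1) 1
          + conj b * ψ (n + 1) 3 = 0 := by
      intro n
      have h1 := congrFun (hn n) 0
      simp [Vmat, Amat, Matrix.sub_mulVec, Matrix.smul_mulVec, Matrix.one_mulVec,
        Matrix.mulVec, dotProduct, Fin.sum_univ_four,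
        Matrix.conjTranspose_apply, Matrix.vecHead, Matrix.vecTail, smul_eq_mul] at h1
      linear_combination h1
    have hR3 : ∀ n : ℕ,
        ψ n 2 + b * ψ (n + 1) 0 - conj c * ψ (n + 1) 2
          - ((a : ℂ) + E) * ψ (n + 1) 3 = 0 := by
      intro n
      have h1 := congrFun (hn n) 3
      simp [Vmat, Amat, Matrix.sub_mulVec, Matrix.smul_mulVec, Matrix.one_mulVec,
        Matrix.mulVec, dotProduct, Fin.sum_univ_four,
        Matrix.conjTranspose_apply, Matrix.vecHead, Matrix.vecTail, smul_eq_mul,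
        show (Fin.succ 2 : Fin 4) = 3 from rfl] at h1
      linear_combination h1
    have hSC : ((sR : ℝ) : ℂ)
        = (a : ℂ) ^ 2 - (E : ℂ) ^ 2 + b * conj b + c * conj c + 1 := by
      have hbb : b * conj b = ((‖b‖ ^ 2 : ℝ) : ℂ) := by
        rw [Complex.mul_conj]
        norm_cast
        rw [Complex.normSq_eq_norm_sq]
      rw [hsRdef, hbb, hcc]
      push_cast
      ring
    have key : ∀ i : Fin 4,
        (∀ n, ψ (n + 2) i = (z₁ + z₂) * ψ (n + 1) i - (z₁ * z₂) * ψ n i) →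
          ∀ n, ψ n i = 0 := fun i h =>
      quad_zero z₁ z₂ hz1 hz2 (fun n => ψ n i) h (comp_tendsto ψ hl2 i)
    have step : ∀ (i : Fin 4) (n : ℕ),
        conj c * ψ (n + 2) i = ((sR : ℝ) : ℂ) * ψ (n + 1) i - c * ψ n i →
          ψ (n + 2) i = (z₁ + z₂) * ψ (n + 1) i - (z₁ * z₂) * ψ n i := by
      intro i n hGn
      rw [hsum, hprod, div_mul_eq_mul_div, div_mul_eq_mul_div, div_sub_div_same,
        eq_div_iff hcb]
      linear_combination hGn
    have h0' : ∀ n, ψ n 0 = 0 := by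
      apply key 0
      intro n
      apply step 0 n
      rw [hSC]
      have e1 := hP (n + 1); have e2 := hP n; have e3 := hR0 n; have e4 := hR3 n
      simp only [show n + 1 + 1 = n + 2 from rfl] at e1
      linear_combination (-(conj c)) * e1 + e2 - ((a : ℂ) + E) * e3 - conj b * e4
    have h1' : ∀ n, ψ n 1 = 0 := by
      apply key 1
      intro n
      apply step 1 n
      rw [hSC]
      have e1 := hR0 (n + 1); have e2 := hP (n + 1); have e3 := hQ (n + 1)
      have e4 := hR0 n
      simp only [show n + 1 + 1 = n + 2 from rfl] at e1 e2 e3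
      linear_combination e1 + ((a : ℂ) - E) * e2 - conj b * e3 - c * e4
    have h2' : ∀ n, ψ n 2 = 0 := by
      apply key 2
      intro n
      apply step 2 n
      rw [hSC]
      have e1 := hR3 (n + 1); have e2 := hP (n + 1); have e3 := hQ (n + 1)
      have e4 := hR3 n
      simp only [show n + 1 + 1 = n + 2 from rfl] at e1 e2 e3
      linear_combination -e1 - b * e2 - ((a : ℂ) + E) * e3 + c * e4
    have h3' : ∀ n, ψ n 3 = 0 := by
      apply key 3
      intro n
      apply step 3 n
      rw [hSC]
      have e1 := hQ (n + 1); have e2 := hQ n; have e3 := hR0 n; have e4 := hR3 n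
      simp only [show n + 1 + 1 = n + 2 from rfl] at e1
      linear_combination conj c * e1 - e2 - b * e3 + ((a : ℂ) - E) * e4
    funext n i
    fin_cases i
    · exact h0' n
    · exact h1' n
    · exact h2' n
    · exact h3' n
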